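/- Let h : ℝ² → ℝ be continuous and satisfy conditions (h1)–(h4). If x = (x_i)_{i∈ℤ} is an h-minimal configuration, then the limit ρ(x) := lim_{n→+∞} x_n/n exists (in ℝ). -/

import Mathlib

open Filter Topology MeasureTheory

/-- The finite segment of `x` between indices `j` and `k` is `h`-minimal. -/
def IsMinSegment (h : ℝ → ℝ → ℝ) (j k : ℤ) (x : ℤ → ℝ) : Prop :=
  ∀ y : ℤ → ℝ, y j = x j → y k = x k →
    ∑ i ∈ Finset.Ico j k, h (x i) (x (i + 1)) ≤ ∑ i ∈ Finset.Ico j k, h (y i) (y (i + 1))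

/-- A bi-infinite configuration is `h`-minimal if every finite segment of it is minimal. -/
def MinimalConfig (h : ℝ → ℝ → ℝ) (x : ℤ → ℝ) : Prop :=
  ∀ j k : ℤ, j < k → IsMinSegment h j k x

/-- The segment `(a, b, c)` is `h`-minimal (endpoints `a`, `c` fixed, middle point varies). -/
def MinTriple (h : ℝ → ℝ → ℝ) (a b c : ℝ) : Prop :=
  ∀ m : ℝ, h a b + h b c ≤ h a m + h m c

/-- Condition (h1): periodicity. -/
def CondH1 (h : ℝ → ℝ → ℝ) : Prop := ∀ x x' : ℝ, h (x + 1) (x' + 1) = h x x'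

/-- Condition (h2): `h (x, x+ξ) → +∞` as `|ξ| → ∞`, uniformly in `x`. -/
def CondH2 (h : ℝ → ℝ → ℝ) : Prop :=
  ∀ M : ℝ, ∃ R : ℝ, ∀ x ξ : ℝ, R ≤ |ξ| → M ≤ h x (x + ξ)

/-- Condition (h3). -/
def CondH3 (h : ℝ → ℝ → ℝ) : Prop :=
  ∀ x ξ x' ξ' : ℝ, x < ξ → x' < ξ' → h x x' + h ξ ξ' < h x ξ' + h ξ x'

/-- Condition (h4). -/
def CondH4 (h : ℝ → ℝ → ℝ) : Prop :=
  ∀ xb x x' ξb ξ' : ℝ, MinTriple h xb x x' → MinTriple h ξb x ξ' →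
    (xb ≠ ξb ∨ x' ≠ ξ') → (xb - ξb) * (x' - ξ') < 0

/-- Condition (h5). -/
def CondH5 (h : ℝ → ℝ → ℝ) : Prop :=
  ∃ ρ : ℝ → ℝ → ℝ, Continuous (Function.uncurry ρ) ∧ (∀ s s' : ℝ, 0 < ρ s s') ∧
    ∀ x ξ x' ξ' : ℝ, x < ξ → x' < ξ' →
      (∫ s in x..ξ, ∫ s' in x'..ξ', ρ s s') ≤ h x ξ' + h ξ x' - h x x' - h ξ ξ'

/-- Condition (h6θ). -/
def CondH6 (θ : ℝ) (h : ℝ → ℝ → ℝ) : Prop :=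
  (∀ x' : ℝ, ConvexOn ℝ Set.univ fun x => θ * (x - x') ^ 2 / 2 - h x x') ∧
  (∀ x : ℝ, ConvexOn ℝ Set.univ fun x' => θ * (x' - x) ^ 2 / 2 - h x x')

namespace RNAux

/-! ### Sum helpers over `Finset.Ico` in `ℤ` -/

lemma ico_succ_insert (a n : ℤ) (h : a ≤ n) :
    Finset.Ico a (n+1) = insert n (Finset.Ico a n) := by
  ext t; simp only [Finset.mem_Ico, Finset.mem_insert]; omega

lemma sum_ico_succ_top (f : ℤ → ℝ) (a n : ℤ) (h : a ≤ n) :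
    ∑ i ∈ Finset.Ico a (n+1), f i = (∑ i ∈ Finset.Ico a n, f i) + f n := by
  rw [ico_succ_insert a n h, Finset.sum_insert (by simp)]; ring

lemma sum_ico_bot (f : ℤ → ℝ) (a b : ℤ) (h : a < b) :
    ∑ i ∈ Finset.Ico a b, f i = f a + ∑ i ∈ Finset.Ico (a+1) b, f i := by
  have e : Finset.Ico a b = insert a (Finset.Ico (a+1) b) := by
    ext t; simp only [Finset.mem_Ico, Finset.mem_insert]; omega
  rw [e, Finset.sum_insert (by simp)]

lemma sum_shift (f : ℤ → ℝ) (a b c : ℤ) :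
    (∑ i ∈ Finset.Ico a b, f (i + c)) = ∑ i ∈ Finset.Ico (a+c) (b+c), f i := by
  rw [← Finset.map_add_right_Ico, Finset.sum_map]; rfl

lemma tele (f : ℤ → ℝ) (a : ℤ) : ∀ n : ℕ,
    (∑ i ∈ Finset.Ico a (a + (n:ℤ)), (f (i+1) - f i)) = f (a + (n:ℤ)) - f a := by
  intro n
  induction n with
  | zero => simp
  | succ m ih =>
    have h1 : (a : ℤ) + ((m:ℤ)+1) = (a + (m:ℤ)) + 1 := by ring
    push_cast
    rw [h1, sum_ico_succ_top _ a (a+(m:ℤ)) (by omega)]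
    push_cast at ih
    rw [ih]; ring

/-- difference of two sums that agree except at two given points -/
lemma sum_two_diff (s : Finset ℤ) (f g : ℤ → ℝ) (a b : ℤ) (hab : a ≠ b)
    (ha : a ∈ s) (hb : b ∈ s) (hfg : ∀ t ∈ s, t ≠ a → t ≠ b → f t = g t) :
    ∑ t ∈ s, f t = (∑ t ∈ s, g t) - (g a + g b) + (f a + f b) := by
  classical
  have hsub : {a, b} ⊆ s := by
    intro t ht; simp only [Finset.mem_insert, Finset.mem_singleton] at ht
    rcases ht with rfl | rfl <;> assumption
  have hf := (Finset.sum_sdiff (f := f) hsub).symm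
  have hg := (Finset.sum_sdiff (f := g) hsub).symm
  have hcong : ∑ t ∈ s \ {a, b}, f t = ∑ t ∈ s \ {a, b}, g t := by
    refine Finset.sum_congr rfl ?_
    intro t ht
    simp only [Finset.mem_sdiff, Finset.mem_insert, Finset.mem_singleton] at ht
    exact hfg t ht.1 (fun h => ht.2 (Or.inl h)) (fun h => ht.2 (Or.inr h))
  have hfab : ∑ t ∈ ({a, b} : Finset ℤ), f t = f a + f b := Finset.sum_pair hab
  have hgab : ∑ t ∈ ({a, b} : Finset ℤ), g t = g a + g b := Finset.sum_pair hab
  rw [hf, hg, hcong, hfab, hgab]; ring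

/-! ### Integer shift invariance of `h` -/

section Shift
variable {h : ℝ → ℝ → ℝ}

lemma hshift_nat (h1 : CondH1 h) : ∀ (n : ℕ) (u v : ℝ), h (u + n) (v + n) = h u v := by
  intro n
  induction n with
  | zero => simp
  | succ m ih =>
    intro u v
    have e1 : (u : ℝ) + ((m:ℝ)+1) = (u + m) + 1 := by ring
    have e2 : (v : ℝ) + ((m:ℝ)+1) = (v + m) + 1 := by ring
    push_cast
    rw [e1, e2, h1 (u + m) (v + m)]
    exact ih u v

lemma hshift (h1 : CondH1 h) : ∀ (m : ℤ) (u v : ℝ), h (u + m) (v + m) = h u v := by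
  intro m u v
  rcases le_or_gt 0 m with hm | hm
  · lift m to ℕ using hm
    exact_mod_cast hshift_nat h1 m u v
  · have hn : (0:ℤ) ≤ -m := by omega
    have := hshift_nat h1 (-m).toNat (u + m) (v + m)
    have hc : ((-m).toNat : ℝ) = -(m:ℝ) := by
      have : ((-m).toNat : ℤ) = -m := Int.toNat_of_nonneg hn
      exact_mod_cast congrArg (fun z : ℤ => (z : ℝ)) this
    rw [hc] at this
    simpa using this.symm

/-- global lower bound for `h` -/
lemma exists_lower (hcont : Continuous (Function.uncurry h)) (h1 : CondH1 h)
    (h2 : CondH2 h) : ∃ L : ℝ, ∀ u v : ℝ, L ≤ h u v := by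
  obtain ⟨R₀, hR₀⟩ := h2 0
  set R : ℝ := max R₀ 0 with hR
  have hRnn : (0:ℝ) ≤ R := le_max_right _ _
  have hcomp : IsCompact ((Set.Icc (0:ℝ) 1) ×ˢ (Set.Icc (-R) (R+1))) :=
    isCompact_Icc.prod isCompact_Icc
  have hne : ((Set.Icc (0:ℝ) 1) ×ˢ (Set.Icc (-R) (R+1))).Nonempty :=
    Set.Nonempty.prod (Set.nonempty_Icc.2 zero_le_one) (Set.nonempty_Icc.2 (by linarith))
  obtain ⟨c, _, hmin⟩ := hcomp.exists_isMinOn hne hcont.continuousOn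
  refine ⟨min (Function.uncurry h c) 0, ?_⟩
  intro u v
  rcases le_or_gt R (|v - u|) with hbig | hsmall
  · have := hR₀ u (v - u) (le_trans (le_max_left _ _) hbig)
    have e : u + (v - u) = v := by ring
    rw [e] at this
    exact le_trans (min_le_right _ _) this
  · -- reduce to the compact strip using periodicity
    have key : h u v = h (u - ⌊u⌋) (v - ⌊u⌋) := by
      have := hshift h1 ⌊u⌋ (u - ⌊u⌋) (v - ⌊u⌋)
      simp only [sub_add_cancel] at this
      exact this
    have hfl : (⌊u⌋ : ℝ) ≤ u := Int.floor_le u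
    have hfl2 : u < ⌊u⌋ + 1 := Int.lt_floor_add_one u
    have habs : -R < v - u ∧ v - u < R := abs_lt.1 hsmall
    have hmem : ((u - ⌊u⌋ : ℝ), (v - ⌊u⌋ : ℝ)) ∈ (Set.Icc (0:ℝ) 1) ×ˢ (Set.Icc (-R) (R+1)) := by
      simp only [Set.mem_prod, Set.mem_Icc]
      exact ⟨⟨by linarith, by linarith⟩, ⟨by linarith [habs.1], by linarith [habs.2]⟩⟩
    have := hmin hmem
    rw [key]
    exact le_trans (min_le_left _ _) this

end Shift

end RNAux

namespace RNAux

section Basic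
variable {h : ℝ → ℝ → ℝ}

/-- minimum of `c ↦ h c (c+P)` over `ℝ`, by periodicity -/
lemma exists_gmin (hcont : Continuous (Function.uncurry h)) (h1 : CondH1 h) (P : ℤ) :
    ∃ c ∈ Set.Icc (0:ℝ) 1, ∀ u : ℝ, h c (c + P) ≤ h u (u + P) := by
  have hg : Continuous (fun c : ℝ => h c (c + P)) := by
    have : (fun c : ℝ => h c (c + P)) =
        (Function.uncurry h) ∘ (fun c : ℝ => (c, c + (P:ℝ))) := rfl
    rw [this]
    exact hcont.comp (continuous_id.prodMk (continuous_id.add continuous_const))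
  obtain ⟨c, hcmem, hmin⟩ := isCompact_Icc.exists_isMinOn (Set.nonempty_Icc.2 zero_le_one)
    hg.continuousOn
  refine ⟨c, hcmem, fun u => ?_⟩
  have key : h u (u + P) = h (u - ⌊u⌋) ((u - ⌊u⌋) + P) := by
    have := hshift h1 ⌊u⌋ (u - ⌊u⌋) ((u - ⌊u⌋) + P)
    have e1 : (u - ⌊u⌋) + (⌊u⌋:ℝ) = u := by ring
    have e2 : ((u - ⌊u⌋) + P) + (⌊u⌋:ℝ) = u + P := by ring
    rw [e1, e2] at this
    exact this
  have hfl : (⌊u⌋ : ℝ) ≤ u := Int.floor_le u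
  have hfl2 : u < ⌊u⌋ + 1 := Int.lt_floor_add_one u
  have hmem : (u - ⌊u⌋ : ℝ) ∈ Set.Icc (0:ℝ) 1 := ⟨by linarith, by linarith⟩
  rw [key]
  exact hmin hmem

/-- extraction of minimal triples from minimal segments -/
lemma minTriple_of_seg {j l i : ℤ} {z : ℤ → ℝ} (hseg : IsMinSegment h j l z)
    (hji : j ≤ i - 1) (hil : i + 1 ≤ l) : MinTriple h (z (i-1)) (z i) (z (i+1)) := by
  classical
  intro m
  set y : ℤ → ℝ := Function.update z i m with hy
  have hyj : y j = z j := Function.update_of_ne (by omega) _ _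
  have hyl : y l = z l := Function.update_of_ne (by omega) _ _
  have spec := hseg y hyj hyl
  have key := sum_two_diff (Finset.Ico j l)
    (fun t => h (y t) (y (t+1))) (fun t => h (z t) (z (t+1))) (i-1) i (by omega)
    (by simp only [Finset.mem_Ico]; omega) (by simp only [Finset.mem_Ico]; omega) ?_
  · have hy1 : y (i-1) = z (i-1) := Function.update_of_ne (by omega) _ _
    have hy2 : y ((i-1)+1) = m := by
      have : (i-1)+1 = i := by omega
      rw [this, hy]; exact Function.update_self _ _ _
    have hy3 : y i = m := by rw [hy]; exact Function.update_self _ _ _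
    have hy4 : y (i+1) = z (i+1) := Function.update_of_ne (by omega) _ _
    simp only [hy1, hy2, hy3, hy4] at key
    have e : (i-1)+1 = i := by omega
    rw [e] at key
    rw [key] at spec
    linarith
  · intro t _ ht1 ht2
    have h1' : y t = z t := Function.update_of_ne ht2 _ _
    have h2' : y (t+1) = z (t+1) := Function.update_of_ne (by omega) _ _
    simp only [h1', h2']

lemma minTriple_of_config {x : ℤ → ℝ} (hx : MinimalConfig h x) (i : ℤ) :
    MinTriple h (x (i-1)) (x i) (x (i+1)) :=
  minTriple_of_seg (hx (i-1) (i+1) (by omega)) (by omega) (by omega)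

/-- translates of minimal configurations are minimal -/
lemma translate_min (h1 : CondH1 h) {x : ℤ → ℝ} (hx : MinimalConfig h x) (q p : ℤ) :
    MinimalConfig h (fun i => x (i + q) - p) := by
  intro j k hjk y hyj hyk
  simp only at hyj hyk ⊢
  set w : ℤ → ℝ := fun i => y (i - q) + p with hw
  have hwj : w (j+q) = x (j+q) := by
    simp only [hw, add_sub_cancel_right, hyj]; ring
  have hwk : w (k+q) = x (k+q) := by
    simp only [hw, add_sub_cancel_right, hyk]; ring
  have spec := hx (j+q) (k+q) (by omega) w hwj hwk
  have L1 : (∑ i ∈ Finset.Ico (j+q) (k+q), h (x i) (x (i+1)))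
      = ∑ i ∈ Finset.Ico j k, h (x (i+q)) (x (i+q+1)) := by
    rw [sum_shift (fun i => h (x i) (x (i+1))) j k q]
  have L2 : (∑ i ∈ Finset.Ico (j+q) (k+q), h (w i) (w (i+1)))
      = ∑ i ∈ Finset.Ico j k, h (w (i+q)) (w (i+q+1)) := by
    rw [sum_shift (fun i => h (w i) (w (i+1))) j k q]
  rw [L1, L2] at spec
  have E1 : ∀ i : ℤ, h (x (i+q)) (x (i+q+1)) = h (x (i+q) - p) (x (i+1+q) - p) := by
    intro i
    have := hshift h1 p (x (i+q) - p) (x (i+q+1) - p)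
    have e1 : (x (i+q) - p) + (p:ℝ) = x (i+q) := by ring
    have e2 : (x (i+q+1) - p) + (p:ℝ) = x (i+q+1) := by ring
    rw [e1, e2] at this
    have e3 : i + 1 + q = i + q + 1 := by omega
    rw [e3]
    exact this
  have E2 : ∀ i : ℤ, h (w (i+q)) (w (i+q+1)) = h (y i) (y (i+1)) := by
    intro i
    have e1 : w (i+q) = y i + p := by simp [hw]
    have e2 : w (i+q+1) = y (i+1) + p := by
      simp only [hw]
      have : i + q + 1 - q = i + 1 := by omega
      rw [this]
    rw [e1, e2, hshift h1 p (y i) (y (i+1))]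
  calc ∑ i ∈ Finset.Ico j k, h (x (i+q) - p) (x (i+1+q) - p)
      = ∑ i ∈ Finset.Ico j k, h (x (i+q)) (x (i+q+1)) := by
        refine Finset.sum_congr rfl fun i _ => (E1 i).symm
    _ ≤ ∑ i ∈ Finset.Ico j k, h (w (i+q)) (w (i+q+1)) := spec
    _ = ∑ i ∈ Finset.Ico j k, h (y i) (y (i+1)) := Finset.sum_congr rfl fun i _ => E2 i

/-- adding an integer constant preserves minimality -/
lemma add_int_min (h1 : CondH1 h) {x : ℤ → ℝ} (hx : MinimalConfig h x) (m : ℤ) :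
    MinimalConfig h (fun i => x i + m) := by
  have := translate_min h1 hx 0 (-m)
  convert this using 2 with i
  push_cast
  ring_nf

end Basic

/-! ### Negation conjugation -/

section NegConj
variable {h : ℝ → ℝ → ℝ}

/-- the conjugated interaction -/
noncomputable def nh (h : ℝ → ℝ → ℝ) : ℝ → ℝ → ℝ := fun u v => h (-u) (-v)

lemma nh_cont (hcont : Continuous (Function.uncurry h)) :
    Continuous (Function.uncurry (nh h)) := by
  have : Function.uncurry (nh h) =
      (Function.uncurry h) ∘ (fun p : ℝ × ℝ => (-p.1, -p.2)) := rfl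
  rw [this]
  exact hcont.comp ((continuous_fst.neg).prodMk (continuous_snd.neg))

lemma nh_h1 (h1 : CondH1 h) : CondH1 (nh h) := by
  intro u v
  simp only [nh]
  have := hshift h1 (-1) (-u) (-v)
  have e1 : (-u : ℝ) + ((-1 : ℤ) : ℝ) = -(u+1) := by push_cast; ring
  have e2 : (-v : ℝ) + ((-1 : ℤ) : ℝ) = -(v+1) := by push_cast; ring
  rw [e1, e2] at this
  exact this

lemma nh_h2 (h2 : CondH2 h) : CondH2 (nh h) := by
  intro M
  obtain ⟨R, hR⟩ := h2 M
  refine ⟨R, fun u ξ hξ => ?_⟩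
  have := hR (-u) (-ξ) (by rwa [abs_neg])
  simp only [nh]
  have e : -u + -ξ = -(u + ξ) := by ring
  rw [e] at this
  exact this

lemma nh_h3 (h3 : CondH3 h) : CondH3 (nh h) := by
  intro a b a' b' hab ha'b'
  simp only [nh]
  have := h3 (-b) (-a) (-b') (-a') (by linarith) (by linarith)
  linarith

lemma nh_minTriple {a b c : ℝ} (ht : MinTriple (nh h) a b c) :
    MinTriple h (-a) (-b) (-c) := by
  intro m
  have := ht (-m)
  simp only [nh, neg_neg] at this
  linarith

lemma nh_h4 (h4 : CondH4 h) : CondH4 (nh h) := by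
  intro xb x x' ξb ξ' t1 t2 hne
  have := h4 (-xb) (-x) (-x') (-ξb) (-ξ') (nh_minTriple t1) (nh_minTriple t2) ?_
  · nlinarith [this]
  · rcases hne with hne | hne
    · exact Or.inl (fun hc => hne (by linarith [neg_injective hc]))
    · exact Or.inr (fun hc => hne (by linarith [neg_injective hc]))

lemma nh_minimal {x : ℤ → ℝ} (hx : MinimalConfig h x) :
    MinimalConfig (nh h) (fun i => - x i) := by
  intro j k hjk y hyj hyk
  simp only at hyj hyk ⊢
  have spec := hx j k hjk (fun i => - y i) (by simp [hyj]) (by simp [hyk])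
  simp only [nh, neg_neg]
  exact spec

end NegConj

end RNAux

namespace RNAux

section Exchange
variable {h : ℝ → ℝ → ℝ}

lemma exchange_strict (h3 : CondH3 h) {a b a' b' : ℝ} (hab : a < b) (hcr : b' < a') :
    h b a' + h a b' < h a a' + h b b' := by
  have := h3 a b b' a' hab hcr
  linarith

lemma exchange_le_aux (h3 : CondH3 h) {a b : ℝ} (hab : a ≤ b) (a' b' : ℝ) :
    h (max a b) (max a' b') + h (min a b) (min a' b') ≤ h a a' + h b b' := by
  rw [max_eq_right hab, min_eq_left hab]
  rcases lt_trichotomy a' b' with hc | hc | hc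
  · rw [max_eq_right hc.le, min_eq_left hc.le]
    linarith
  · subst hc; rw [max_self, min_self]; linarith
  · rw [max_eq_left hc.le, min_eq_right hc.le]
    rcases eq_or_lt_of_le hab with rfl | hab'
    · linarith
    · have := exchange_strict h3 hab' hc
      linarith

lemma exchange (h3 : CondH3 h) (a b a' b' : ℝ) :
    h (max a b) (max a' b') + h (min a b) (min a' b') ≤ h a a' + h b b' := by
  rcases le_total a b with hab | hba
  · exact exchange_le_aux h3 hab a' b'
  · have := exchange_le_aux h3 hba b' a'
    rw [max_comm b a, min_comm b a, max_comm b' a', min_comm b' a'] at this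
    linarith

/-- **Aubry's crossing lemma**: two minimal configurations cannot cross twice. -/
lemma cross (h3 : CondH3 h) (h4 : CondH4 h)
    {x y : ℤ → ℝ} (hx : MinimalConfig h x) (hy : MinimalConfig h y)
    {j k l : ℤ} (hjk : j < k) (hkl : k < l)
    (H1 : y j < x j) (H2 : x k < y k) (H3 : y l < x l) : False := by
  classical
  set M : ℤ → ℝ := fun i => max (x i) (y i) with hM
  set m : ℤ → ℝ := fun i => min (x i) (y i) with hm
  have hMj : M j = x j := max_eq_left H1.le
  have hMl : M l = x l := max_eq_left H3.le
  have hmj : m j = y j := min_eq_right H1.le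
  have hml : m l = y l := min_eq_right H3.le
  have hjl : j < l := hjk.trans hkl
  -- the four actions
  set Ax := ∑ i ∈ Finset.Ico j l, h (x i) (x (i+1)) with hAx
  set Ay := ∑ i ∈ Finset.Ico j l, h (y i) (y (i+1)) with hAy
  set AM := ∑ i ∈ Finset.Ico j l, h (M i) (M (i+1)) with hAM
  set Am := ∑ i ∈ Finset.Ico j l, h (m i) (m (i+1)) with hAm
  have hxM : Ax ≤ AM := hx j l hjl M hMj hMl
  have hym : Ay ≤ Am := hy j l hjl m hmj hml
  -- pointwise exchange
  set gap : ℤ → ℝ := fun i =>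
    (h (x i) (x (i+1)) + h (y i) (y (i+1))) - (h (M i) (M (i+1)) + h (m i) (m (i+1)))
    with hgapdef
  have hgap : ∀ i, 0 ≤ gap i := by
    intro i
    have := exchange h3 (x i) (y i) (x (i+1)) (y (i+1))
    simp only [hgapdef, hM, hm]
    linarith
  have hsplit : ∑ i ∈ Finset.Ico j l, gap i = (Ax + Ay) - (AM + Am) := by
    simp only [hgapdef, hAx, hAy, hAM, hAm, Finset.sum_sub_distrib, Finset.sum_add_distrib]
  have hsumzero : ∑ i ∈ Finset.Ico j l, gap i = 0 := by
    have hle : ∑ i ∈ Finset.Ico j l, gap i ≤ 0 := by rw [hsplit]; linarith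
    have hge : 0 ≤ ∑ i ∈ Finset.Ico j l, gap i :=
      Finset.sum_nonneg fun i _ => hgap i
    linarith
  have hzero : ∀ i ∈ Finset.Ico j l, gap i = 0 := by
    have := (Finset.sum_eq_zero_iff_of_nonneg (fun i _ => hgap i)).1 hsumzero
    exact this
  -- equality of actions
  have hMx : AM = Ax := by
    rw [hsplit] at hsumzero
    linarith
  -- no strict crossing inside [j, l)
  have hnostrict : ∀ i, j ≤ i → i < l → y i < x i → ¬ (x (i+1) < y (i+1)) := by
    intro i hji hil hyx hc
    have hmem : i ∈ Finset.Ico j l := by simp only [Finset.mem_Ico]; omega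
    have hz := hzero i hmem
    have hstrict : h (x i) (y (i+1)) + h (y i) (x (i+1))
        < h (y i) (y (i+1)) + h (x i) (x (i+1)) := by
      have := exchange_strict h3 (a := y i) (b := x i) (a' := y (i+1)) (b' := x (i+1))
        hyx hc
      linarith
    have e1 : M i = x i := max_eq_left hyx.le
    have e2 : M (i+1) = y (i+1) := max_eq_right hc.le
    have e3 : m i = y i := min_eq_right hyx.le
    have e4 : m (i+1) = x (i+1) := min_eq_left hc.le
    simp only [hgapdef, e1, e2, e3, e4] at hz
    linarith
  -- find the first touching point after j
  have hex : ∃ n : ℕ, x (j+1+(n:ℤ)) ≤ y (j+1+(n:ℤ)) ∧ j+1+(n:ℤ) ≤ k := by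
    refine ⟨(k - j - 1).toNat, ?_⟩
    have e : j + 1 + ((k - j - 1).toNat : ℤ) = k := by
      rw [Int.toNat_of_nonneg (by omega)]; ring
    rw [e]
    exact ⟨H2.le, le_refl k⟩
  set n₀ := Nat.find hex with hn₀
  obtain ⟨hfound, hik⟩ := Nat.find_spec hex
  set i₀ : ℤ := j + 1 + (n₀ : ℤ) with hi₀
  have hji₀ : j < i₀ := by omega
  have hi₀k : i₀ ≤ k := hik
  have hprev : y (i₀ - 1) < x (i₀ - 1) := by
    rcases Nat.eq_zero_or_pos n₀ with h0 | hpos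
    · have : i₀ - 1 = j := by omega
      rw [this]; exact H1
    · have hmin := Nat.find_min hex (m := n₀ - 1) (by omega)
      push_neg at hmin
      have e : j + 1 + ((n₀ - 1 : ℕ) : ℤ) = i₀ - 1 := by
        have : ((n₀ - 1 : ℕ) : ℤ) = (n₀ : ℤ) - 1 := by omega
        rw [this]; omega
      rw [e] at hmin
      by_contra hcon
      push_neg at hcon
      have := hmin hcon
      omega
  have heq : x i₀ = y i₀ := by
    rcases eq_or_lt_of_le hfound with he | hlt
    · exact he
    · exfalso
      have := hnostrict (i₀ - 1) (by omega) (by omega) hprev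
      have e : (i₀ - 1) + 1 = i₀ := by omega
      rw [e] at this
      exact this hlt
  -- h4 on the x- and y-triples at i₀
  have Tx := minTriple_of_config hx i₀
  have Ty := minTriple_of_config hy i₀
  rw [← heq] at Ty
  have hprod := h4 (x (i₀-1)) (x i₀) (x (i₀+1)) (y (i₀-1)) (y (i₀+1)) Tx Ty
    (Or.inl (ne_of_gt hprev))
  have hfac : 0 < x (i₀-1) - y (i₀-1) := by linarith
  have hstep : x (i₀+1) < y (i₀+1) := by nlinarith
  -- M is a minimal segment on [j, l]
  have hMseg : IsMinSegment h j l M := by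
    intro w hwj hwl
    have : Ax ≤ ∑ i ∈ Finset.Ico j l, h (w i) (w (i+1)) :=
      hx j l hjl w (by rw [hwj, hMj]) (by rw [hwl, hMl])
    calc ∑ i ∈ Finset.Ico j l, h (M i) (M (i+1)) = AM := hAM.symm
      _ = Ax := hMx
      _ ≤ _ := this
  have TM := minTriple_of_seg hMseg (by omega : j ≤ i₀ - 1) (by omega : i₀ + 1 ≤ l)
  have eM1 : M (i₀-1) = x (i₀-1) := max_eq_left hprev.le
  have eM2 : M i₀ = x i₀ := max_eq_left (le_of_eq heq.symm)
  have eM3 : M (i₀+1) = y (i₀+1) := max_eq_right hstep.le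
  rw [eM1, eM2, eM3] at TM
  have hfinal := h4 (x (i₀-1)) (x i₀) (y (i₀+1)) (x (i₀-1)) (x (i₀+1)) TM Tx
    (Or.inr (ne_of_gt hstep))
  simp only [sub_self, zero_mul] at hfinal
  exact lt_irrefl 0 hfinal

end Exchange

end RNAux

namespace RNAux

section Dicho
variable {h : ℝ → ℝ → ℝ}

/-- eventual comparability of two minimal configurations (towards `+∞`) -/
lemma dichotomy (h3 : CondH3 h) (h4 : CondH4 h) {x y : ℤ → ℝ}
    (hx : MinimalConfig h x) (hy : MinimalConfig h y) :
    (∃ N : ℤ, ∀ i ≥ N, y i ≤ x i) ∨ (∃ N : ℤ, ∀ i ≥ N, x i ≤ y i) := by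
  by_contra hcon
  push_neg at hcon
  obtain ⟨hA, hB⟩ := hcon
  obtain ⟨j, _, hj⟩ := hB 0
  obtain ⟨k, hk1, hk2⟩ := hA (j+1)
  obtain ⟨l, hl1, hl2⟩ := hB (k+1)
  exact cross h3 h4 hx hy (by omega : j < k) (by omega : k < l) hj hk2 hl2

end Dicho

section Grow

/-- from an eventual growth inequality to an asymptotic lower bound -/
lemma grow_lower {x : ℤ → ℝ} {q p N : ℤ} (hq : 0 < q)
    (hgrow : ∀ i ≥ N, x i + (p:ℝ) ≤ x (i + q)) :
    ∀ ε > 0, ∀ᶠ n : ℕ in Filter.atTop, (p:ℝ)/(q:ℝ) - ε ≤ x n / n := by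
  have hqR : (0:ℝ) < (q:ℝ) := by exact_mod_cast hq
  -- iterated growth
  have stepA : ∀ t : ℕ, ∀ r : ℤ, N ≤ r → x r + (t:ℝ) * p ≤ x (r + (t:ℤ) * q) := by
    intro t
    induction t with
    | zero => intro r _; simp
    | succ s ih =>
      intro r hr
      have h1 := ih r hr
      have h2 := hgrow (r + (s:ℤ) * q) (by nlinarith [hq])
      have e : r + (s:ℤ) * q + q = r + ((s:ℕ)+1 : ℤ) * q := by ring
      rw [e] at h2
      push_cast
      push_cast at h1 h2
      linarith
  -- decomposition of any n ≥ N
  have stepB : ∀ n : ℤ, N ≤ n → ∃ r : ℤ, ∃ t : ℕ,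
      N ≤ r ∧ r < N + q ∧ n = r + (t:ℤ) * q := by
    intro n hn
    have hnn := Int.emod_nonneg (n - N) (by omega : q ≠ 0)
    refine ⟨N + (n - N) % q, ((n - N) / q).toNat, by omega, ?_, ?_⟩
    · have := Int.emod_lt_of_pos (n - N) hq
      omega
    · have h1 : ((n - N) / q) * q + (n - N) % q = n - N := Int.ediv_mul_add_emod _ _
      have h2 : 0 ≤ (n - N) / q := Int.ediv_nonneg (by omega) (by omega)
      rw [Int.toNat_of_nonneg h2]
      omega
  -- a uniform bound on the finitely many residues
  have hne : (Finset.Ico N (N + q)).Nonempty := by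
    rw [Finset.nonempty_Ico]; omega
  set C₁ : ℝ := (Finset.Ico N (N + q)).inf' hne x with hC₁
  have hC₁le : ∀ r : ℤ, N ≤ r → r < N + q → C₁ ≤ x r := by
    intro r h1 h2
    exact Finset.inf'_le x (by simp only [Finset.mem_Ico]; omega)
  -- the linear lower bound
  set C : ℝ := |C₁| + (|(p:ℝ)|/q) * (|(N:ℝ)| + q) with hC
  have main : ∀ n : ℤ, N ≤ n → (p:ℝ)/q * n - C ≤ x n := by
    intro n hn
    obtain ⟨r, t, hr1, hr2, hrt⟩ := stepB n hn
    have h1 := stepA t r hr1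
    rw [← hrt] at h1
    have h2 := hC₁le r hr1 hr2
    have htq : (t:ℝ) = ((n:ℝ) - r) / q := by
      have : (n:ℝ) = (r:ℝ) + (t:ℝ) * q := by exact_mod_cast congrArg (fun z : ℤ => (z:ℝ)) hrt
      field_simp
      linarith
    have hrbound : |(r:ℝ)| ≤ |(N:ℝ)| + q := by
      rw [abs_le]
      have e1 : (N:ℝ) ≤ r := by exact_mod_cast hr1
      have e2 : (r:ℝ) < N + q := by exact_mod_cast hr2
      constructor
      · have := neg_abs_le (N:ℝ); linarith
      · have := le_abs_self (N:ℝ); linarith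
    have key : (p:ℝ)/q * n - (C₁ + (t:ℝ) * p) = (p:ℝ)/q * r - C₁ := by
      rw [htq]; field_simp; ring
    have hbound : (p:ℝ)/q * r - C₁ ≤ C := by
      have h3 : (p:ℝ)/q * r ≤ |(p:ℝ)|/q * (|(N:ℝ)| + q) := by
        calc (p:ℝ)/q * r ≤ |(p:ℝ)/q * r| := le_abs_self _
          _ = |(p:ℝ)|/q * |(r:ℝ)| := by
              rw [abs_mul, abs_div, abs_of_pos hqR]
          _ ≤ |(p:ℝ)|/q * (|(N:ℝ)| + q) := by
              apply mul_le_mul_of_nonneg_left hrbound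
              positivity
      have h4 : -C₁ ≤ |C₁| := neg_le_abs _
      rw [hC]; linarith
    linarith
  -- conclusion
  intro ε hε
  obtain ⟨n₁, hn₁⟩ := exists_nat_ge (C / ε)
  rw [Filter.eventually_atTop]
  refine ⟨max (max n₁ 1) N.toNat, fun n hn => ?_⟩
  have hn1 : (n₁:ℝ) ≤ n := by
    have : n₁ ≤ n := le_trans (le_trans (le_max_left _ _) (le_max_left _ _)) hn
    exact_mod_cast this
  have hnN : N ≤ (n:ℤ) := by
    have : N.toNat ≤ n := le_trans (le_max_right _ _) hn
    omega
  have hnpos : (0:ℝ) < n := by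
    have : 1 ≤ n := le_trans (le_trans (le_max_right _ _) (le_max_left _ _)) hn
    exact_mod_cast Nat.lt_of_lt_of_le Nat.zero_lt_one this
  have h1 := main (n:ℤ) hnN
  have hCn : C ≤ ε * n := by
    have h2 : C / ε ≤ (n:ℝ) := le_trans hn₁ hn1
    calc C = ε * (C / ε) := by field_simp
      _ ≤ ε * n := by apply mul_le_mul_of_nonneg_left h2 hε.le
  rw [le_div_iff₀ hnpos]
  push_cast at h1 ⊢
  set DD : ℝ := (p:ℝ)/(q:ℝ) with hDD
  set nR : ℝ := (n:ℝ) with hnR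
  set CC : ℝ := C with hCC
  set XN : ℝ := x (n:ℤ) with hXN
  nlinarith [h1, hCn]

/-- from an eventual growth inequality to an asymptotic upper bound -/
lemma grow_upper {x : ℤ → ℝ} {q p N : ℤ} (hq : 0 < q)
    (hgrow : ∀ i ≥ N, x (i + q) ≤ x i + (p:ℝ)) :
    ∀ ε > 0, ∀ᶠ n : ℕ in Filter.atTop, x n / n ≤ (p:ℝ)/(q:ℝ) + ε := by
  have hgrow' : ∀ i ≥ N, (fun i => - x i) i + ((-p : ℤ):ℝ) ≤ (fun i => - x i) (i + q) := by
    intro i hi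
    have := hgrow i hi
    show -x i + ((-p : ℤ):ℝ) ≤ -x (i + q)
    push_cast
    linarith
  intro ε hε
  have := grow_lower hq hgrow' ε hε
  filter_upwards [this] with n hn
  have hn' : ((-p:ℤ):ℝ)/(q:ℝ) - ε ≤ -x (n:ℤ) / (n:ℝ) := hn
  push_cast at hn'
  rw [neg_div, neg_div] at hn'
  linarith

end Grow

end RNAux

namespace RNAux

/-! ### Periodic configurations -/

/-- `(q, q·P)`-periodic configurations -/
def Per (Qn : ℕ) (P : ℤ) (Y : ℤ → ℝ) : Prop :=
  ∀ i : ℤ, Y (i + (Qn:ℤ)) = Y i + (((Qn:ℤ) * P : ℤ) : ℝ)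

/-- action of one period -/
noncomputable def act (h : ℝ → ℝ → ℝ) (Qn : ℕ) (Y : ℤ → ℝ) : ℝ :=
  ∑ i ∈ Finset.Ico (0:ℤ) (Qn:ℤ), h (Y i) (Y (i+1))

section Periodic
variable {h : ℝ → ℝ → ℝ} {P : ℤ} {Qn : ℕ}

lemma per_shift {g : ℤ → ℝ} {Q : ℤ} (hg : ∀ i, g (i + Q) = g i) :
    ∀ (t : ℕ) (i : ℤ), g (i + Q * t) = g i := by
  intro t
  induction t with
  | zero => intro i; simp
  | succ s ih =>
    intro i
    have e : i + Q * ((s:ℤ)+1) = (i + Q * s) + Q := by ring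
    push_cast
    rw [e, hg (i + Q * s)]
    exact_mod_cast ih i

lemma per_reduce {g : ℤ → ℝ} {Q : ℤ} (hQ : 0 < Q) (hg : ∀ i, g (i + Q) = g i) (i : ℤ) :
    g i = g (i % Q) := by
  have e : i = i % Q + Q * (i / Q).toNat ∨ i % Q = i + Q * (-(i / Q)).toNat := by
    rcases le_or_gt 0 (i / Q) with hd | hd
    · left
      rw [Int.toNat_of_nonneg hd]
      have := Int.emod_add_mul_ediv i Q
      linarith [this]
    · right
      rw [Int.toNat_of_nonneg (by omega : 0 ≤ -(i/Q))]
      have := Int.emod_add_mul_ediv i Q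
      linarith [this]
  rcases e with e | e
  · conv_lhs => rw [e]
    rw [per_shift hg]
  · conv_rhs => rw [e]
    rw [per_shift hg]

/-- the term function of a periodic configuration is periodic -/
lemma per_term (h1 : CondH1 h) {Y : ℤ → ℝ} (hY : Per Qn P Y) (i : ℤ) :
    h (Y (i + (Qn:ℤ))) (Y (i + (Qn:ℤ) + 1)) = h (Y i) (Y (i+1)) := by
  have e1 := hY i
  have e2 := hY (i+1)
  have e3 : i + (Qn:ℤ) + 1 = i + 1 + (Qn:ℤ) := by ring
  rw [e1, e3, e2]
  exact hshift h1 ((Qn:ℤ) * P) (Y i) (Y (i+1))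

/-- window invariance of the action -/
lemma win_inv (h1 : CondH1 h) {Y : ℤ → ℝ} (hY : Per Qn P Y) (hQ : 0 < Qn) (a : ℤ) :
    (∑ i ∈ Finset.Ico a (a + (Qn:ℤ)), h (Y i) (Y (i+1))) = act h Qn Y := by
  set T : ℤ → ℝ := fun i => h (Y i) (Y (i+1)) with hT
  have hTper : ∀ i, T (i + (Qn:ℤ)) = T i := fun i => per_term h1 hY i
  set f : ℤ → ℝ := fun a => ∑ i ∈ Finset.Ico a (a + (Qn:ℤ)), T i with hf
  have hQZ : (0:ℤ) < (Qn:ℤ) := by exact_mod_cast hQ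
  have hstep : ∀ a : ℤ, f a = f (a+1) := by
    intro a
    have e1 : f a = T a + ∑ i ∈ Finset.Ico (a+1) (a + (Qn:ℤ)), T i := by
      rw [hf]; exact sum_ico_bot T a (a + (Qn:ℤ)) (by omega)
    have e2 : f (a+1) = (∑ i ∈ Finset.Ico (a+1) (a + (Qn:ℤ)), T i) + T (a + (Qn:ℤ)) := by
      show (∑ i ∈ Finset.Ico (a+1) (a + 1 + (Qn:ℤ)), T i) = _
      have e : a + 1 + (Qn:ℤ) = (a + (Qn:ℤ)) + 1 := by ring
      rw [e]
      exact sum_ico_succ_top T (a+1) (a + (Qn:ℤ)) (by omega)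
    rw [e1, e2, hTper a]
    ring
  have hup : ∀ (b : ℤ) (n : ℕ), f b = f (b + n) := by
    intro b n
    induction n with
    | zero => simp
    | succ s ih =>
      have e : b + ((s:ℤ)+1) = (b + s) + 1 := by ring
      push_cast
      rw [e, ← hstep (b + s)]
      exact_mod_cast ih
  have : act h Qn Y = f 0 := by
    rw [hf, hT, act]; norm_num
  rw [this]
  rcases le_or_gt 0 a with ha | ha
  · have := hup 0 a.toNat
    rw [Int.toNat_of_nonneg ha] at this
    simp only [zero_add] at this
    exact this.symm
  · have := hup a (-a).toNat
    rw [Int.toNat_of_nonneg (by omega : (0:ℤ) ≤ -a)] at this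
    have e : a + -a = 0 := by ring
    rw [e] at this
    exact this

/-- action is invariant under adding an integer constant -/
lemma act_add_int (h1 : CondH1 h) (Y : ℤ → ℝ) (m : ℤ) :
    act h Qn (fun i => Y i + (m:ℝ)) = act h Qn Y := by
  unfold act
  refine Finset.sum_congr rfl fun i _ => ?_
  exact hshift h1 m (Y i) (Y (i+1))

lemma per_add_int {Y : ℤ → ℝ} (hY : Per Qn P Y) (m : ℤ) :
    Per Qn P (fun i => Y i + (m:ℝ)) := by
  intro i
  simp only
  rw [hY i]
  ring

/-- sum of `d` over one period vanishes, where `d i = Y (i+1) - Y i - P` -/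
lemma per_d_sum (hQ : 0 < Qn) {Y : ℤ → ℝ} (hY : Per Qn P Y) :
    (∑ i ∈ Finset.Ico (0:ℤ) (Qn:ℤ), (Y (i+1) - Y i - (P:ℝ))) = 0 := by
  have htele := tele Y 0 Qn
  simp only [zero_add] at htele
  have hsum : (∑ i ∈ Finset.Ico (0:ℤ) (Qn:ℤ), (Y (i+1) - Y i - (P:ℝ)))
      = (∑ i ∈ Finset.Ico (0:ℤ) (Qn:ℤ), (Y (i+1) - Y i)) - (Qn:ℝ) * P := by
    rw [Finset.sum_sub_distrib, Finset.sum_const, Int.card_Ico]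
    simp only [sub_zero, Int.toNat_natCast, nsmul_eq_mul]
    try ring
  rw [hsum, htele]
  have := hY 0
  simp only [zero_add] at this
  rw [this]
  push_cast
  ring

end Periodic

end RNAux

namespace RNAux

section Minimizer
variable {h : ℝ → ℝ → ℝ} {P : ℤ} {Qn : ℕ}

/-- index reduction mod `Qn` -/
def idx (Qn : ℕ) (hQ : 0 < Qn) (i : ℤ) : Fin Qn :=
  ⟨(i % (Qn:ℤ)).toNat, by
    have h1 : (0:ℤ) < (Qn:ℤ) := by exact_mod_cast hQ
    have h2 := Int.emod_nonneg i (by omega : ((Qn:ℤ)) ≠ 0)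
    have h3 := Int.emod_lt_of_pos i h1
    omega⟩

/-- configuration built from a vector of length `Qn` -/
noncomputable def vecCfg (Qn : ℕ) (hQ : 0 < Qn) (P : ℤ) (v : Fin Qn → ℝ) : ℤ → ℝ :=
  fun i => v (idx Qn hQ i) + ((i / (Qn:ℤ) : ℤ) : ℝ) * (((Qn:ℤ) * P : ℤ) : ℝ)

lemma vecCfg_per (hQ : 0 < Qn) (v : Fin Qn → ℝ) : Per Qn P (vecCfg Qn hQ P v) := by
  intro i
  have hQZ : ((Qn:ℤ)) ≠ 0 := by
    have : (0:ℤ) < (Qn:ℤ) := by exact_mod_cast hQ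
    omega
  have e1 : idx Qn hQ (i + (Qn:ℤ)) = idx Qn hQ i := by
    apply Fin.ext
    show ((i + (Qn:ℤ)) % (Qn:ℤ)).toNat = (i % (Qn:ℤ)).toNat
    have e : i + (Qn:ℤ) = i + (Qn:ℤ) * 1 := by ring
    rw [e, Int.add_mul_emod_self_left]
  have e2 : (i + (Qn:ℤ)) / (Qn:ℤ) = i / (Qn:ℤ) + 1 := by
    have := Int.add_mul_ediv_right i 1 hQZ
    simpa using this
  unfold vecCfg
  rw [e1, e2]
  push_cast
  ring

lemma vecCfg_eq (hQ : 0 < Qn) (v : Fin Qn → ℝ) {i : ℤ} (h0 : 0 ≤ i) (hi : i < (Qn:ℤ)) :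
    vecCfg Qn hQ P v i = v ⟨i.toNat, by omega⟩ := by
  have e1 : i % (Qn:ℤ) = i := Int.emod_eq_of_lt h0 hi
  have e2 : i / (Qn:ℤ) = 0 := Int.ediv_eq_zero_of_lt h0 hi
  unfold vecCfg idx
  simp only [e1, e2]
  push_cast
  ring

/-- existence of a global minimizer of the periodic action -/
lemma exists_per_minimizer (hcont : Continuous (Function.uncurry h)) (h1 : CondH1 h)
    (h2 : CondH2 h) (P : ℤ) (Qn : ℕ) (hQ2 : 2 ≤ Qn)
    {c : ℝ} (hc : c ∈ Set.Icc (0:ℝ) 1) (hcmin : ∀ u : ℝ, h c (c + P) ≤ h u (u + P)) :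
    ∃ Z : ℤ → ℝ, Per Qn P Z ∧ (∀ Y, Per Qn P Y → act h Qn Z ≤ act h Qn Y) ∧
      act h Qn Z ≤ (Qn:ℝ) * h c (c + P) := by
  classical
  have hQ : 0 < Qn := by omega
  have hQZ : (0:ℤ) < (Qn:ℤ) := by exact_mod_cast hQ
  obtain ⟨L, hL⟩ := exists_lower hcont h1 h2
  set nQ : ℝ := (Qn:ℝ) with hnQ
  have hnQ2 : (2:ℝ) ≤ nQ := by rw [hnQ]; exact_mod_cast hQ2
  set gval : ℝ := h c (c + P) with hgval
  set M₁ : ℝ := nQ * gval - (nQ - 1) * L + 1 with hM₁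
  obtain ⟨R₁, hR₁⟩ := h2 M₁
  set R : ℝ := max R₁ 0 with hR
  have hR0 : 0 ≤ R := le_max_right _ _
  set B : ℝ := 1 + nQ * |(P:ℝ)| + nQ * R + nQ with hB
  have hPnn : 0 ≤ |(P:ℝ)| := abs_nonneg _
  have hBbig : 1 + nQ * |(P:ℝ)| ≤ B := by rw [hB]; nlinarith
  have hBbig2 : 1 + nQ * R ≤ B := by rw [hB]; nlinarith
  have hBpos : 0 < B := by rw [hB]; nlinarith
  set K : Set (Fin Qn → ℝ) := Set.pi Set.univ (fun _ => Set.Icc (-B) B) with hK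
  have hKcomp : IsCompact K := isCompact_univ_pi fun _ => isCompact_Icc
  have hKne : K.Nonempty := ⟨fun _ => 0, by
    intro s _
    constructor
    · show -B ≤ (0:ℝ); linarith
    · show (0:ℝ) ≤ B; linarith⟩
  set actV : (Fin Qn → ℝ) → ℝ := fun v => act h Qn (vecCfg Qn hQ P v) with hactV
  have hcontV : Continuous actV := by
    rw [hactV]
    unfold act
    apply continuous_finset_sum
    intro i _
    have expand : (fun v : Fin Qn → ℝ =>
        h (vecCfg Qn hQ P v i) (vecCfg Qn hQ P v (i+1))) =
        (Function.uncurry h) ∘ (fun v : Fin Qn → ℝ =>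
          (v (idx Qn hQ i) + ((i / (Qn:ℤ) : ℤ) : ℝ) * (((Qn:ℤ) * P : ℤ) : ℝ),
           v (idx Qn hQ (i+1)) + (((i+1) / (Qn:ℤ) : ℤ) : ℝ) * (((Qn:ℤ) * P : ℤ) : ℝ))) := rfl
    rw [expand]
    apply hcont.comp
    apply Continuous.prodMk
    · exact (continuous_apply _).add continuous_const
    · exact (continuous_apply _).add continuous_const
  obtain ⟨v0, hv0K, hv0min⟩ := hKcomp.exists_isMinOn hKne hcontV.continuousOn
  set Z : ℤ → ℝ := vecCfg Qn hQ P v0 with hZ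
  -- the line vector
  set vl : Fin Qn → ℝ := fun s => c + ((s:ℕ):ℝ) * (P:ℝ) with hvl
  have hvlK : vl ∈ K := by
    intro s _
    have hs0 : (0:ℝ) ≤ ((s:ℕ):ℝ) := by positivity
    have hs1 : ((s:ℕ):ℝ) ≤ nQ := by
      rw [hnQ]
      have : (s:ℕ) ≤ Qn := le_of_lt s.isLt
      exact_mod_cast this
    have hub : ((s:ℕ):ℝ) * (P:ℝ) ≤ nQ * |(P:ℝ)| := by
      calc ((s:ℕ):ℝ) * (P:ℝ) ≤ ((s:ℕ):ℝ) * |(P:ℝ)| :=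
            mul_le_mul_of_nonneg_left (le_abs_self _) hs0
        _ ≤ nQ * |(P:ℝ)| := mul_le_mul_of_nonneg_right hs1 hPnn
    have hlb : -(nQ * |(P:ℝ)|) ≤ ((s:ℕ):ℝ) * (P:ℝ) := by
      calc -(nQ * |(P:ℝ)|) ≤ -(((s:ℕ):ℝ) * |(P:ℝ)|) := by nlinarith
        _ ≤ ((s:ℕ):ℝ) * (P:ℝ) := by nlinarith [neg_abs_le (P:ℝ)]
    have hc0 := hc.1
    have hc1 := hc.2
    simp only [hvl, Set.mem_Icc]
    constructor <;> nlinarith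
  -- value along the line
  have hline_val : ∀ i : ℤ, 0 ≤ i → i ≤ (Qn:ℤ) → vecCfg Qn hQ P vl i = c + (i:ℝ) * (P:ℝ) := by
    intro i h0 hi
    rcases lt_or_eq_of_le hi with hi' | hi'
    · rw [vecCfg_eq hQ vl h0 hi']
      simp only [hvl]
      congr 2
      have : ((i.toNat:ℕ):ℤ) = i := Int.toNat_of_nonneg h0
      exact_mod_cast congrArg (fun z : ℤ => (z:ℝ)) this
    · subst hi'
      have hper := vecCfg_per (P := P) hQ vl 0
      simp only [zero_add] at hper
      have h00 : vecCfg Qn hQ P vl 0 = c := by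
        rw [vecCfg_eq hQ vl le_rfl hQZ]
        simp [hvl]
      rw [hper, h00]
      push_cast
      ring
  have hline_act : actV vl = nQ * gval := by
    show (∑ i ∈ Finset.Ico (0:ℤ) (Qn:ℤ),
      h (vecCfg Qn hQ P vl i) (vecCfg Qn hQ P vl (i+1))) = nQ * gval
    have : ∀ i ∈ Finset.Ico (0:ℤ) (Qn:ℤ),
        h (vecCfg Qn hQ P vl i) (vecCfg Qn hQ P vl (i+1)) = gval := by
      intro i hi
      simp only [Finset.mem_Ico] at hi
      rw [hline_val i hi.1 (by omega), hline_val (i+1) (by omega) (by omega)]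
      have e1 : c + ((i:ℝ)+1) * (P:ℝ) = (c + (P:ℝ)) + ((i * P : ℤ):ℝ) := by push_cast; ring
      have e2 : c + (i:ℝ) * (P:ℝ) = c + ((i * P : ℤ):ℝ) := by push_cast; ring
      push_cast
      rw [e1, e2]
      rw [hshift h1 (i * P) c (c + (P:ℝ))]
    rw [Finset.sum_congr rfl this, Finset.sum_const, Int.card_Ico]
    simp only [sub_zero, Int.toNat_natCast, nsmul_eq_mul]
    rfl
  have hZle : act h Qn Z ≤ nQ * gval := by
    rw [← hline_act]
    exact hv0min hvlK
  refine ⟨Z, vecCfg_per hQ v0, ?_, hZle⟩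
  -- global minimality
  intro Y hY
  set m : ℤ := ⌊Y 0⌋ with hm
  set Y' : ℤ → ℝ := fun i => Y i + ((-m : ℤ):ℝ) with hY'
  have hY'per : Per Qn P Y' := per_add_int hY (-m)
  have hY'act : act h Qn Y' = act h Qn Y := act_add_int h1 Y (-m)
  have hY'0 : 0 ≤ Y' 0 ∧ Y' 0 < 1 := by
    have h0 : (⌊Y 0⌋ : ℝ) ≤ Y 0 := Int.floor_le _
    have h1' : Y 0 < ⌊Y 0⌋ + 1 := Int.lt_floor_add_one _
    constructor <;> (simp only [hY', hm]; push_cast; linarith)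
  by_cases hbox : ∀ i : ℤ, 0 ≤ i → i ≤ (Qn:ℤ) → |Y' i| ≤ B
  · -- competitor fits in the box
    set w : Fin Qn → ℝ := fun s => Y' ((s:ℕ):ℤ) with hw
    have hwK : w ∈ K := by
      intro s _
      have := hbox ((s:ℕ):ℤ) (by positivity) (by exact_mod_cast le_of_lt s.isLt)
      exact abs_le.1 this
    have hVY : ∀ i : ℤ, 0 ≤ i → i ≤ (Qn:ℤ) → vecCfg Qn hQ P w i = Y' i := by
      intro i h0 hi
      rcases lt_or_eq_of_le hi with hi' | hi'
      · rw [vecCfg_eq hQ w h0 hi']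
        simp only [hw]
        congr 1
        exact Int.toNat_of_nonneg h0
      · subst hi'
        have hper := vecCfg_per (P := P) hQ w 0
        simp only [zero_add] at hper
        have h00 : vecCfg Qn hQ P w 0 = Y' 0 := by
          rw [vecCfg_eq hQ w le_rfl hQZ]
          simp only [hw]
          norm_num
        have hper' := hY'per 0
        simp only [zero_add] at hper'
        rw [hper, h00, hper']
    have hacteq : actV w = act h Qn Y' := by
      show (∑ i ∈ Finset.Ico (0:ℤ) (Qn:ℤ),
        h (vecCfg Qn hQ P w i) (vecCfg Qn hQ P w (i+1))) = act h Qn Y'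
      unfold act
      refine Finset.sum_congr rfl fun i hi => ?_
      simp only [Finset.mem_Ico] at hi
      rw [hVY i hi.1 (by omega), hVY (i+1) (by omega) (by omega)]
    calc act h Qn Z = actV v0 := rfl
      _ ≤ actV w := hv0min hwK
      _ = act h Qn Y' := hacteq
      _ = act h Qn Y := hY'act
  · -- escape: there must be a big jump, so the action is large
    push_neg at hbox
    obtain ⟨i₀, hi₀0, hi₀Q, hi₀big⟩ := hbox
    have hgap : ∃ t : ℤ, 0 ≤ t ∧ t < (Qn:ℤ) ∧ R₁ ≤ |Y' (t+1) - Y' t| := by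
      by_contra hcon
      push_neg at hcon
      have hbnd : ∀ n : ℕ, (n:ℤ) ≤ (Qn:ℤ) → |Y' (n:ℤ)| ≤ 1 + (n:ℝ) * R := by
        intro n
        induction n with
        | zero =>
          intro _
          simp only [Int.natCast_zero, Nat.cast_zero, zero_mul, add_zero]
          rw [abs_le]
          constructor <;> linarith [hY'0.1, hY'0.2]
        | succ s ih =>
          intro hs
          have hsQ : ((s:ℕ):ℤ) < (Qn:ℤ) := by push_cast at hs ⊢; omega
          have ihs := ih (by omega)
          have hg := hcon (s:ℤ) (by positivity) hsQ
          have habs : |Y' ((s:ℤ)+1)| ≤ |Y' (s:ℤ)| + |Y' ((s:ℤ)+1) - Y' (s:ℤ)| := by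
            have := abs_add_le (Y' (s:ℤ)) (Y' ((s:ℤ)+1) - Y' (s:ℤ))
            simpa using this
          have hgR : |Y' ((s:ℤ)+1) - Y' (s:ℤ)| ≤ R := le_trans hg.le (le_max_left _ _)
          have e : ((s+1:ℕ):ℤ) = (s:ℤ) + 1 := by push_cast; ring
          rw [e]
          push_cast
          calc |Y' ((s:ℤ)+1)| ≤ |Y' (s:ℤ)| + R := by linarith
            _ ≤ 1 + (s:ℝ) * R + R := by linarith
            _ = 1 + ((s:ℝ)+1) * R := by ring
      have hi₀' := hbnd i₀.toNat (by omega)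
      rw [Int.toNat_of_nonneg hi₀0] at hi₀'
      have hcast : ((i₀.toNat:ℕ):ℝ) ≤ nQ := by
        rw [hnQ]
        have : (i₀.toNat : ℤ) ≤ (Qn:ℤ) := by omega
        exact_mod_cast this
      have : |Y' i₀| ≤ 1 + nQ * R := by
        have hRmul : ((i₀.toNat:ℕ):ℝ) * R ≤ nQ * R := mul_le_mul_of_nonneg_right hcast hR0
        linarith
      linarith [hBbig2]
    obtain ⟨t, ht0, htQ, htbig⟩ := hgap
    have hterm : M₁ ≤ h (Y' t) (Y' (t+1)) := by
      have := hR₁ (Y' t) (Y' (t+1) - Y' t) htbig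
      have e : Y' t + (Y' (t+1) - Y' t) = Y' (t+1) := by ring
      rw [e] at this
      exact this
    have htmem : t ∈ Finset.Ico (0:ℤ) (Qn:ℤ) := by simp only [Finset.mem_Ico]; omega
    have hsplit := Finset.add_sum_erase (Finset.Ico (0:ℤ) (Qn:ℤ))
      (fun i => h (Y' i) (Y' (i+1))) htmem
    have hothers : ((Finset.Ico (0:ℤ) (Qn:ℤ)).erase t).card • L ≤
        ∑ i ∈ (Finset.Ico (0:ℤ) (Qn:ℤ)).erase t, h (Y' i) (Y' (i+1)) :=
      Finset.card_nsmul_le_sum _ _ _ (fun i _ => hL (Y' i) (Y' (i+1)))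
    have hcard : ((Finset.Ico (0:ℤ) (Qn:ℤ)).erase t).card = Qn - 1 := by
      rw [Finset.card_erase_of_mem htmem, Int.card_Ico]
      simp
    rw [hcard] at hothers
    have hcast2 : ((Qn - 1 : ℕ):ℝ) = nQ - 1 := by
      have : (1:ℕ) ≤ Qn := by omega
      push_cast [Nat.cast_sub this]
      ring
    have hY'big : M₁ + (nQ - 1) * L ≤ act h Qn Y' := by
      unfold act
      rw [← hsplit]
      have : ((Qn - 1 : ℕ)) • L = (nQ - 1) * L := by
        rw [nsmul_eq_mul, hcast2]
      rw [this] at hothers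
      linarith
    have : act h Qn Z < act h Qn Y' := by
      rw [hM₁] at hY'big
      linarith
    rw [← hY'act]
    linarith

end Minimizer

end RNAux

namespace RNAux

section Rigidity
variable {h : ℝ → ℝ → ℝ} {P : ℤ} {Qn : ℕ}

/-- minimal triples of a global periodic minimizer -/
lemma per_minTriple (h1 : CondH1 h) (hQ2 : 2 ≤ Qn) {Z : ℤ → ℝ}
    (hZper : Per Qn P Z) (hZmin : ∀ Y, Per Qn P Y → act h Qn Z ≤ act h Qn Y) (i : ℤ) :
    MinTriple h (Z (i-1)) (Z i) (Z (i+1)) := by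
  classical
  have hQ : 0 < Qn := by omega
  have hQZ : (0:ℤ) < (Qn:ℤ) := by exact_mod_cast hQ
  have hQZ2 : (2:ℤ) ≤ (Qn:ℤ) := by exact_mod_cast hQ2
  intro m
  set δ : ℝ := m - Z i with hδ
  set Yc : ℤ → ℝ := fun k => Z k + (if (k - i) % (Qn:ℤ) = 0 then δ else 0) with hYc
  have hYcper : Per Qn P Yc := by
    intro k
    simp only [hYc]
    have e : (k + (Qn:ℤ) - i) % (Qn:ℤ) = (k - i) % (Qn:ℤ) := by
      have e2 : k + (Qn:ℤ) - i = (k - i) + (Qn:ℤ) * 1 := by ring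
      rw [e2, Int.add_mul_emod_self_left]
    rw [e, hZper k]
    ring
  have hmin := hZmin Yc hYcper
  have hwZ := win_inv h1 hZper hQ (i-1)
  have hwY := win_inv h1 hYcper hQ (i-1)
  have hYceq : ∀ k : ℤ, -1 ≤ k - i → k - i < (Qn:ℤ) → k ≠ i → Yc k = Z k := by
    intro k hk1 hk2 hki
    have hnot : (k - i) % (Qn:ℤ) ≠ 0 := by
      intro hmod
      have hdvd := Int.dvd_of_emod_eq_zero hmod
      rcases lt_trichotomy (k - i) 0 with hn | h0 | hp
      · have := Int.le_of_dvd (by omega) (dvd_neg.mpr hdvd)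
        omega
      · exact hki (by omega)
      · have := Int.le_of_dvd hp hdvd
        omega
    simp only [hYc, if_neg hnot, add_zero]
  have hYci : Yc i = m := by
    simp only [hYc]
    have : (i - i) % (Qn:ℤ) = 0 := by simp
    rw [if_pos this, hδ]
    ring
  -- compare on the window
  have key := sum_two_diff (Finset.Ico (i-1) (i-1+(Qn:ℤ)))
    (fun t => h (Yc t) (Yc (t+1))) (fun t => h (Z t) (Z (t+1))) (i-1) i (by omega)
    (by simp only [Finset.mem_Ico]; omega) (by simp only [Finset.mem_Ico]; omega) ?_
  · have e1 : Yc (i-1) = Z (i-1) := hYceq (i-1) (by omega) (by omega) (by omega)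
    have e2 : Yc ((i-1)+1) = m := by
      have e : (i-1)+1 = i := by omega
      rw [e, hYci]
    have e3 : Yc (i+1) = Z (i+1) := hYceq (i+1) (by omega) (by omega) (by omega)
    simp only [e1, e2, e3, hYci] at key
    have e : (i-1)+1 = i := by omega
    rw [e] at key
    have hsums : (∑ t ∈ Finset.Ico (i-1) (i-1+(Qn:ℤ)), h (Z t) (Z (t+1)))
        ≤ ∑ t ∈ Finset.Ico (i-1) (i-1+(Qn:ℤ)), h (Yc t) (Yc (t+1)) := by
      rw [hwZ, hwY]
      exact hmin
    rw [key] at hsums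
    linarith
  · intro t ht ht1 ht2
    simp only [Finset.mem_Ico] at ht
    have e1 : Yc t = Z t := hYceq t (by omega) (by omega) ht2
    have e2 : Yc (t+1) = Z (t+1) := hYceq (t+1) (by omega) (by omega) (by omega)
    simp only [e1, e2]

/-- the rigidity: the action of a periodic minimizer is at least that of the best line -/
lemma per_min_act_lower (h1 : CondH1 h) (h3 : CondH3 h) (h4 : CondH4 h)
    (hQ2 : 2 ≤ Qn) {Z : ℤ → ℝ}
    (hZper : Per Qn P Z) (hZmin : ∀ Y, Per Qn P Y → act h Qn Z ≤ act h Qn Y)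
    {c : ℝ} (hcmin : ∀ u : ℝ, h c (c + P) ≤ h u (u + P)) :
    (Qn:ℝ) * h c (c + P) ≤ act h Qn Z := by
  classical
  have hQ : 0 < Qn := by omega
  have hQZ : (0:ℤ) < (Qn:ℤ) := by exact_mod_cast hQ
  set TZ : ℤ → ℝ := fun i => Z (i+1) - (P:ℝ) with hTZ
  have hTZper : Per Qn P TZ := by
    intro k
    simp only [hTZ]
    have e : k + (Qn:ℤ) + 1 = (k+1) + (Qn:ℤ) := by ring
    rw [e, hZper (k+1)]
    ring
  have hTZact : act h Qn TZ = act h Qn Z := by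
    have step1 : act h Qn TZ = ∑ i ∈ Finset.Ico (0:ℤ) (Qn:ℤ), h (Z (i+1)) (Z (i+1+1)) := by
      unfold act
      refine Finset.sum_congr rfl fun i _ => ?_
      simp only [hTZ]
      have := hshift h1 P (Z (i+1) - (P:ℝ)) (Z (i+1+1) - (P:ℝ))
      have e1 : Z (i+1) - (P:ℝ) + (P:ℝ) = Z (i+1) := by ring
      have e2 : Z (i+1+1) - (P:ℝ) + (P:ℝ) = Z (i+1+1) := by ring
      rw [e1, e2] at this
      exact this.symm
    have step2 : (∑ i ∈ Finset.Ico (0:ℤ) (Qn:ℤ), h (Z (i+1)) (Z (i+1+1)))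
        = ∑ i ∈ Finset.Ico (1:ℤ) ((Qn:ℤ)+1), h (Z i) (Z (i+1)) := by
      have := sum_shift (fun i => h (Z i) (Z (i+1))) 0 (Qn:ℤ) 1
      simp only [zero_add] at this
      exact this
    have step3 : (∑ i ∈ Finset.Ico (1:ℤ) ((Qn:ℤ)+1), h (Z i) (Z (i+1))) = act h Qn Z := by
      have := win_inv h1 hZper hQ 1
      have e : (1:ℤ) + (Qn:ℤ) = (Qn:ℤ) + 1 := by ring
      rw [e] at this
      exact this
    rw [step1, step2, step3]
  have hTZmin : ∀ Y, Per Qn P Y → act h Qn TZ ≤ act h Qn Y := by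
    intro Y hY
    rw [hTZact]
    exact hZmin Y hY
  set U : ℤ → ℝ := fun i => min (Z i) (TZ i) with hU
  set V : ℤ → ℝ := fun i => max (Z i) (TZ i) with hV
  have hUper : Per Qn P U := by
    intro k
    simp only [hU]
    rw [hZper k, hTZper k]
    exact min_add_add_right _ _ _
  have hVper : Per Qn P V := by
    intro k
    simp only [hV]
    rw [hZper k, hTZper k]
    exact max_add_add_right _ _ _
  -- exchange
  set gap2 : ℤ → ℝ := fun i =>
    (h (Z i) (Z (i+1)) + h (TZ i) (TZ (i+1))) - (h (V i) (V (i+1)) + h (U i) (U (i+1)))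
    with hgap2
  have hgap2nn : ∀ i, 0 ≤ gap2 i := by
    intro i
    have := exchange h3 (Z i) (TZ i) (Z (i+1)) (TZ (i+1))
    simp only [hgap2, hU, hV]
    linarith
  have hsplit : ∑ i ∈ Finset.Ico (0:ℤ) (Qn:ℤ), gap2 i
      = (act h Qn Z + act h Qn TZ) - (act h Qn V + act h Qn U) := by
    unfold act
    simp only [hgap2, Finset.sum_sub_distrib, Finset.sum_add_distrib]
  have hUge : act h Qn Z ≤ act h Qn U := hZmin U hUper
  have hVge : act h Qn Z ≤ act h Qn V := hZmin V hVper
  have hsumzero : ∑ i ∈ Finset.Ico (0:ℤ) (Qn:ℤ), gap2 i = 0 := by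
    have hle : ∑ i ∈ Finset.Ico (0:ℤ) (Qn:ℤ), gap2 i ≤ 0 := by
      rw [hsplit]; rw [hTZact]; linarith
    have hge : 0 ≤ ∑ i ∈ Finset.Ico (0:ℤ) (Qn:ℤ), gap2 i :=
      Finset.sum_nonneg fun i _ => hgap2nn i
    linarith
  have hzero : ∀ i ∈ Finset.Ico (0:ℤ) (Qn:ℤ), gap2 i = 0 :=
    (Finset.sum_eq_zero_iff_of_nonneg (fun i _ => hgap2nn i)).1 hsumzero
  have hUact : act h Qn U = act h Qn Z := by
    rw [hsplit, hTZact] at hsumzero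
    linarith
  have hUmin : ∀ Y, Per Qn P Y → act h Qn U ≤ act h Qn Y := by
    intro Y hY
    rw [hUact]
    exact hZmin Y hY
  -- the difference function
  set d : ℤ → ℝ := fun i => TZ i - Z i with hd
  have hdper : ∀ k, d (k + (Qn:ℤ)) = d k := by
    intro k
    simp only [hd]
    rw [hZper k, hTZper k]
    ring
  have hdsum : ∑ i ∈ Finset.Ico (0:ℤ) (Qn:ℤ), d i = 0 := by
    have := per_d_sum hQ hZper
    refine Eq.trans (Finset.sum_congr rfl fun i _ => ?_) this
    simp only [hd, hTZ]
    ring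
  have hd2 : ∀ a b : ℤ, a % (Qn:ℤ) = b % (Qn:ℤ) → d a = d b := by
    intro a b hab
    rw [per_reduce hQZ hdper a, per_reduce hQZ hdper b, hab]
  -- no strict crossing on the window
  have nsc0 : ∀ i ∈ Finset.Ico (0:ℤ) (Qn:ℤ),
      ¬(0 < d i ∧ d (i+1) < 0) ∧ ¬(d i < 0 ∧ 0 < d (i+1)) := by
    intro i hi
    have hz := hzero i hi
    constructor
    · rintro ⟨h1', h2'⟩
      have hZlt : Z i < TZ i := by simp only [hd] at h1'; linarith
      have hZgt : TZ (i+1) < Z (i+1) := by simp only [hd] at h2'; linarith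
      have hstrict := exchange_strict h3 (a := Z i) (b := TZ i)
        (a' := Z (i+1)) (b' := TZ (i+1)) hZlt hZgt
      have e1 : V i = TZ i := max_eq_right hZlt.le
      have e2 : V (i+1) = Z (i+1) := max_eq_left hZgt.le
      have e3 : U i = Z i := min_eq_left hZlt.le
      have e4 : U (i+1) = TZ (i+1) := min_eq_right hZgt.le
      simp only [hgap2, e1, e2, e3, e4] at hz
      linarith
    · rintro ⟨h1', h2'⟩
      have hZgt : TZ i < Z i := by simp only [hd] at h1'; linarith
      have hZlt : Z (i+1) < TZ (i+1) := by simp only [hd] at h2'; linarith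
      have hstrict := exchange_strict h3 (a := TZ i) (b := Z i)
        (a' := TZ (i+1)) (b' := Z (i+1)) hZgt hZlt
      have e1 : V i = Z i := max_eq_left hZgt.le
      have e2 : V (i+1) = TZ (i+1) := max_eq_right hZlt.le
      have e3 : U i = TZ i := min_eq_right hZgt.le
      have e4 : U (i+1) = Z (i+1) := min_eq_left hZlt.le
      simp only [hgap2, e1, e2, e3, e4] at hz
      linarith
  have nsc : ∀ i : ℤ, ¬(0 < d i ∧ d (i+1) < 0) ∧ ¬(d i < 0 ∧ 0 < d (i+1)) := by
    intro i
    set r : ℤ := i % (Qn:ℤ) with hr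
    have hr0 : 0 ≤ r := Int.emod_nonneg i (by omega)
    have hrQ : r < (Qn:ℤ) := Int.emod_lt_of_pos i hQZ
    have hda : d i = d r := per_reduce hQZ hdper i
    have hdb : d (i+1) = d (r+1) := by
      apply hd2
      have hiq : i = r + (Qn:ℤ) * (i / (Qn:ℤ)) := by
        rw [hr]
        have := Int.emod_add_mul_ediv i (Qn:ℤ)
        linarith [this]
      have : i + 1 = (r + 1) + (Qn:ℤ) * (i / (Qn:ℤ)) := by omega
      rw [this, Int.add_mul_emod_self_left]
    rw [hda, hdb]
    exact nsc0 r (by simp only [Finset.mem_Ico]; omega)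
  -- propagation of zeros
  have hprop : ∀ i₀ : ℤ, d i₀ = 0 → d (i₀+1) = 0 ∧ d (i₀-1) = 0 := by
    intro i₀ h0
    by_contra hcon
    have hne : d (i₀-1) ≠ 0 ∨ d (i₀+1) ≠ 0 := by tauto
    have TzZ := per_minTriple h1 hQ2 hZper hZmin i₀
    have TzT := per_minTriple h1 hQ2 hTZper hTZmin i₀
    have hTZi : TZ i₀ = Z i₀ := by simp only [hd] at h0; linarith
    rw [hTZi] at TzT
    have hne' : Z (i₀-1) ≠ TZ (i₀-1) ∨ Z (i₀+1) ≠ TZ (i₀+1) := by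
      rcases hne with hne | hne
      · left; intro hc; apply hne; simp only [hd]; rw [hc]; ring
      · right; intro hc; apply hne; simp only [hd]; rw [hc]; ring
    have hprod := h4 (Z (i₀-1)) (Z i₀) (Z (i₀+1)) (TZ (i₀-1)) (TZ (i₀+1)) TzZ TzT hne'
    have hdd : d (i₀-1) * d (i₀+1) < 0 := by
      have e : d (i₀-1) * d (i₀+1)
          = (Z (i₀-1) - TZ (i₀-1)) * (Z (i₀+1) - TZ (i₀+1)) := by
        simp only [hd]; ring
      rw [e]; exact hprod
    have TzU := per_minTriple h1 hQ2 hUper hUmin i₀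
    rcases mul_neg_iff.1 hdd with ⟨hpos, hneg⟩ | ⟨hneg, hpos⟩
    · -- d (i₀-1) > 0, d (i₀+1) < 0
      have e1 : U (i₀-1) = Z (i₀-1) := by
        apply min_eq_left; simp only [hd] at hpos; linarith
      have e2 : U i₀ = Z i₀ := by
        apply min_eq_left; rw [hTZi]
      have e3 : U (i₀+1) = TZ (i₀+1) := by
        apply min_eq_right; simp only [hd] at hneg; linarith
      rw [e1, e2, e3] at TzU
      have hfin := h4 (Z (i₀-1)) (Z i₀) (TZ (i₀+1)) (Z (i₀-1)) (Z (i₀+1)) TzU TzZ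
        (Or.inr (by simp only [hd] at hneg; intro hc; rw [hc] at hneg; linarith))
      simp only [sub_self, zero_mul] at hfin
      exact lt_irrefl 0 hfin
    · -- d (i₀-1) < 0, d (i₀+1) > 0
      have e1 : U (i₀-1) = TZ (i₀-1) := by
        apply min_eq_right; simp only [hd] at hneg; linarith
      have e2 : U i₀ = Z i₀ := by
        apply min_eq_left; rw [hTZi]
      have e3 : U (i₀+1) = Z (i₀+1) := by
        apply min_eq_left; simp only [hd] at hpos; linarith
      rw [e1, e2, e3] at TzU
      have hfin := h4 (TZ (i₀-1)) (Z i₀) (Z (i₀+1)) (TZ (i₀-1)) (TZ (i₀+1)) TzU TzT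
        (Or.inr (by simp only [hd] at hpos; intro hc; rw [hc] at hpos; linarith))
      simp only [sub_self, zero_mul] at hfin
      exact lt_irrefl 0 hfin
  -- main dichotomy
  by_cases hzex : ∃ i₀ : ℤ, d i₀ = 0
  · obtain ⟨i₀, hi₀⟩ := hzex
    have hup : ∀ n : ℕ, d (i₀ + (n:ℤ)) = 0 := by
      intro n
      induction n with
      | zero => simpa using hi₀
      | succ s ih =>
        have := (hprop (i₀ + (s:ℤ)) ih).1
        have e : i₀ + ((s:ℤ)+1) = (i₀ + (s:ℤ)) + 1 := by ring
        push_cast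
        rw [e]
        exact this
    have hdown : ∀ n : ℕ, d (i₀ - (n:ℤ)) = 0 := by
      intro n
      induction n with
      | zero => simpa using hi₀
      | succ s ih =>
        have := (hprop (i₀ - (s:ℤ)) ih).2
        have e : i₀ - ((s:ℤ)+1) = (i₀ - (s:ℤ)) - 1 := by ring
        push_cast
        rw [e]
        exact this
    have hall : ∀ i : ℤ, d i = 0 := by
      intro i
      rcases le_or_gt i₀ i with hle | hlt
      · have := hup (i - i₀).toNat
        rw [Int.toNat_of_nonneg (by omega)] at this
        have e : i₀ + (i - i₀) = i := by ring
        rwa [e] at this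
      · have := hdown (i₀ - i).toNat
        rw [Int.toNat_of_nonneg (by omega)] at this
        have e : i₀ - (i₀ - i) = i := by ring
        rwa [e] at this
    -- Z is a line of slope P; conclude
    have hstep : ∀ i : ℤ, Z (i+1) = Z i + (P:ℝ) := by
      intro i
      have := hall i
      simp only [hd, hTZ] at this
      linarith
    unfold act
    have hterm : ∀ i ∈ Finset.Ico (0:ℤ) (Qn:ℤ), h c (c + (P:ℝ)) ≤ h (Z i) (Z (i+1)) := by
      intro i _
      rw [hstep i]
      exact hcmin (Z i)
    calc (Qn:ℝ) * h c (c + (P:ℝ))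
        = ∑ _i ∈ Finset.Ico (0:ℤ) (Qn:ℤ), h c (c + (P:ℝ)) := by
          rw [Finset.sum_const, Int.card_Ico]
          simp only [sub_zero, Int.toNat_natCast, nsmul_eq_mul]
      _ ≤ ∑ i ∈ Finset.Ico (0:ℤ) (Qn:ℤ), h (Z i) (Z (i+1)) :=
          Finset.sum_le_sum hterm
  · push_neg at hzex
    exfalso
    rcases lt_or_gt_of_ne (hzex 0) with hneg | hpos
    · have hallneg : ∀ n : ℕ, d (n:ℤ) < 0 := by
        intro n
        induction n with
        | zero => simpa using hneg
        | succ s ih =>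
          have hn := (nsc (s:ℤ)).2
          have : ¬ (0 < d ((s:ℤ)+1)) := fun hc => hn ⟨ih, hc⟩
          push_neg at this
          have hne := hzex ((s:ℤ)+1)
          push_cast
          rcases lt_or_eq_of_le this with hc | hc
          · exact hc
          · exact absurd hc hne
      have : (∑ i ∈ Finset.Ico (0:ℤ) (Qn:ℤ), d i) < 0 := by
        apply Finset.sum_neg
        · intro i hi
          simp only [Finset.mem_Ico] at hi
          have := hallneg i.toNat
          rwa [Int.toNat_of_nonneg hi.1] at this
        · rw [Finset.nonempty_Ico]; omega
      linarith [hdsum]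
    · have hallpos : ∀ n : ℕ, 0 < d (n:ℤ) := by
        intro n
        induction n with
        | zero => simpa using hpos
        | succ s ih =>
          have hn := (nsc (s:ℤ)).1
          have : ¬ (d ((s:ℤ)+1) < 0) := fun hc => hn ⟨ih, hc⟩
          push_neg at this
          have hne := hzex ((s:ℤ)+1)
          push_cast
          rcases lt_or_eq_of_le this with hc | hc
          · exact hc
          · exact absurd hc.symm hne
      have : 0 < (∑ i ∈ Finset.Ico (0:ℤ) (Qn:ℤ), d i) := by
        apply Finset.sum_pos
        · intro i hi
          simp only [Finset.mem_Ico] at hi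
          have := hallpos i.toNat
          rwa [Int.toNat_of_nonneg hi.1] at this
        · rw [Finset.nonempty_Ico]; omega
      linarith [hdsum]

end Rigidity

end RNAux

namespace RNAux

section Line
variable {h : ℝ → ℝ → ℝ}

/-- **Existence of periodic minimal configurations of any integer slope.** -/
lemma line_minimal (hcont : Continuous (Function.uncurry h)) (h1 : CondH1 h)
    (h2 : CondH2 h) (h3 : CondH3 h) (h4 : CondH4 h) (P : ℤ) :
    ∃ c : ℝ, MinimalConfig h (fun i : ℤ => c + (i:ℝ) * (P:ℝ)) := by
  classical
  obtain ⟨c, hcmem, hcmin0⟩ := exists_gmin hcont h1 P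
  refine ⟨c, ?_⟩
  intro j k hjk w hwj hwk
  set z : ℤ → ℝ := fun i => c + (i:ℝ) * (P:ℝ) with hz
  have hzterm : ∀ i : ℤ, h (z i) (z (i+1)) = h c (c + (P:ℝ)) := by
    intro i
    simp only [hz]
    have e1 : c + ((i:ℝ)+1) * (P:ℝ) = (c + (P:ℝ)) + ((i * P : ℤ):ℝ) := by push_cast; ring
    have e2 : c + (i:ℝ) * (P:ℝ) = c + ((i * P : ℤ):ℝ) := by push_cast; ring
    push_cast
    rw [e1, e2, hshift h1 (i * P) c (c + (P:ℝ))]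
  set Qn : ℕ := (k - j).toNat with hQn
  have hQn1 : 1 ≤ Qn := by omega
  have hQnk : (Qn:ℤ) = k - j := Int.toNat_of_nonneg (by omega)
  have hLHS : (∑ i ∈ Finset.Ico j k, h (z i) (z (i+1))) = (Qn:ℝ) * h c (c + (P:ℝ)) := by
    rw [Finset.sum_congr rfl (fun i _ => hzterm i), Finset.sum_const, Int.card_Ico]
    have : (k - j).toNat = Qn := rfl
    rw [this, nsmul_eq_mul]
  rcases eq_or_lt_of_le hQn1 with hQ1 | hQ2
  · -- trivial case of a single step
    have hk : k = j + 1 := by omega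
    subst hk
    have e : Finset.Ico j (j+1) = {j} := by
      ext t; simp only [Finset.mem_Ico, Finset.mem_singleton]; omega
    rw [e, Finset.sum_singleton, Finset.sum_singleton, hwj, hwk]
  · -- main case: periodize the competitor
    have hQ2' : 2 ≤ Qn := hQ2
    have hQZ : (0:ℤ) < (Qn:ℤ) := by exact_mod_cast (by omega : 0 < Qn)
    set W : ℤ → ℝ := fun i =>
      w (j + (i - j) % (Qn:ℤ)) + (((i - j) / (Qn:ℤ) : ℤ) : ℝ) * (((Qn:ℤ) * P : ℤ):ℝ)
      with hW
    have hWper : Per Qn P W := by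
      intro i
      simp only [hW]
      have e1 : (i + (Qn:ℤ) - j) % (Qn:ℤ) = (i - j) % (Qn:ℤ) := by
        have e : i + (Qn:ℤ) - j = (i - j) + (Qn:ℤ) * 1 := by ring
        rw [e, Int.add_mul_emod_self_left]
      have e2 : (i + (Qn:ℤ) - j) / (Qn:ℤ) = (i - j) / (Qn:ℤ) + 1 := by
        have e : i + (Qn:ℤ) - j = (i - j) + (Qn:ℤ) := by ring
        rw [e]
        have := Int.add_mul_ediv_right (i - j) 1 (show (Qn:ℤ) ≠ 0 by omega)
        simpa using this
      rw [e1, e2]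
      push_cast
      ring
    have hWeq : ∀ i : ℤ, j ≤ i → i < k → W i = w i := by
      intro i h0 hik
      simp only [hW]
      have e1 : (i - j) % (Qn:ℤ) = i - j := Int.emod_eq_of_lt (by omega) (by omega)
      have e2 : (i - j) / (Qn:ℤ) = 0 := Int.ediv_eq_zero_of_lt (by omega) (by omega)
      rw [e1, e2]
      have e3 : j + (i - j) = i := by ring
      rw [e3]
      push_cast
      ring
    have hWk : W k = w k := by
      simp only [hW]
      have e1 : (k - j) % (Qn:ℤ) = 0 := by
        rw [← hQnk]
        simp
      have e2 : (k - j) / (Qn:ℤ) = 1 := by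
        rw [← hQnk]
        exact Int.ediv_self (by omega)
      rw [e1, e2, add_zero, hwj, hwk]
      simp only [hz]
      push_cast
      have e3 : (k:ℝ) = (j:ℝ) + (Qn:ℝ) := by
        have : (k:ℤ) = j + Qn := by omega
        exact_mod_cast congrArg (fun t : ℤ => (t:ℝ)) this
      rw [e3]
      ring
    -- action of W over the window [j, k)
    have hwin := win_inv h1 hWper (by omega : 0 < Qn) j
    have hjQn : j + (Qn:ℤ) = k := by omega
    rw [hjQn] at hwin
    have hWsum : (∑ i ∈ Finset.Ico j k, h (W i) (W (i+1)))
        = ∑ i ∈ Finset.Ico j k, h (w i) (w (i+1)) := by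
      refine Finset.sum_congr rfl fun i hi => ?_
      simp only [Finset.mem_Ico] at hi
      rcases eq_or_lt_of_le (by omega : i + 1 ≤ k) with he | hlt
      · rw [hWeq i hi.1 hi.2, he, hWk]
      · rw [hWeq i hi.1 hi.2, hWeq (i+1) (by omega) hlt]
    -- apply the lower bound for periodic configurations
    obtain ⟨Z, hZper, hZmin, _⟩ :=
      exists_per_minimizer hcont h1 h2 P Qn hQ2' hcmem hcmin0
    have hlow := per_min_act_lower h1 h3 h4 hQ2' hZper hZmin hcmin0
    have hfinal : (Qn:ℝ) * h c (c + (P:ℝ)) ≤ act h Qn W :=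
      le_trans hlow (hZmin W hWper)
    rw [← hwin, hWsum] at hfinal
    rw [hLHS]
    exact hfinal

end Line

end RNAux

namespace RNAux

section BadCase
variable {h : ℝ → ℝ → ℝ}

/-- a minimal configuration cannot outrun every linear growth rate -/
lemma badcase (hcont : Continuous (Function.uncurry h)) (h1 : CondH1 h)
    (h2 : CondH2 h) (h3 : CondH3 h) (h4 : CondH4 h) {x : ℤ → ℝ} (hx : MinimalConfig h x)
    (hbad : ∀ p : ℤ, ∃ N : ℤ, ∀ i ≥ N, x i + (p:ℝ) ≤ x (i+1)) : False := by
  classical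
  set A₀ : ℤ := ⌈x 1 - x 0⌉ + 1 with hA₀def
  have hA₀ : x 1 - x 0 < (A₀:ℝ) := by
    have := Int.le_ceil (x 1 - x 0)
    rw [hA₀def]
    push_cast
    linarith
  set y : ℤ → ℝ := fun i => x (i + 1) - (A₀:ℝ) with hy
  have hymin : MinimalConfig h y := translate_min h1 hx 1 A₀
  -- step 1 : bounded steps on the left tail
  have step1 : ∀ i : ℤ, i ≤ -1 → x (i+1) ≤ x i + (A₀:ℝ) := by
    by_contra hcon
    push_neg at hcon
    obtain ⟨i₀, hi₀1, hi₀2⟩ := hcon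
    obtain ⟨N, hN⟩ := hbad (A₀ + 1)
    set l : ℤ := max N 1 with hl
    have hll : 1 ≤ l := le_max_right _ _
    have hlN : N ≤ l := le_max_left _ _
    have hgrow := hN l hlN
    have hxl : x l < y l := by
      simp only [hy]
      push_cast at hgrow
      linarith
    have hx0 : y 0 < x 0 := by
      simp only [hy, zero_add]
      linarith
    have hxi₀ : x i₀ < y i₀ := by
      simp only [hy]
      linarith
    exact cross h3 h4 hymin hx (by omega : i₀ < 0) (by omega : (0:ℤ) < l) hxi₀ hx0 hxl
  -- step 2 : left tail decreases at most linearly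
  have step2 : ∀ n : ℕ, x 0 - (A₀:ℝ) * n ≤ x (-(n:ℤ)) := by
    intro n
    induction n with
    | zero => simp
    | succ s ih =>
      have hstep := step1 (-(s:ℤ)-1) (by omega)
      have e : -(s:ℤ)-1+1 = -(s:ℤ) := by ring
      rw [e] at hstep
      have e2 : -((s:ℤ)+1) = -(s:ℤ)-1 := by ring
      push_cast
      rw [e2]
      push_cast at ih
      linarith
  -- the comparison line
  set P : ℤ := A₀ + 1 with hP
  obtain ⟨c, hzmin⟩ := line_minimal hcont h1 h2 h3 h4 P
  set z : ℤ → ℝ := fun i : ℤ => c + (i:ℝ) * (P:ℝ) with hz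
  -- step 3 : x lies above every integer translate of the line
  have step3 : ∀ m : ℤ, ∀ k : ℤ, z k + (m:ℝ) ≤ x k := by
    intro m k
    by_contra hcon
    push_neg at hcon
    set zm : ℤ → ℝ := fun i => z i + (m:ℝ) with hzm
    have hzmmin : MinimalConfig h zm := add_int_min h1 hzmin m
    -- a far-left index where x is above the line
    obtain ⟨n₁, hn₁⟩ := exists_nat_ge (c + (m:ℝ) - x 0 + 1)
    set n : ℕ := max n₁ (1 - k).toNat with hn
    have hnn₁ : (n₁:ℝ) ≤ n := by exact_mod_cast le_max_left n₁ ((1-k).toNat)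
    have hnk : -(n:ℤ) < k := by
      have : (1 - k).toNat ≤ n := le_max_right _ _
      omega
    have hleft : zm (-(n:ℤ)) < x (-(n:ℤ)) := by
      have h2' := step2 n
      have e : zm (-(n:ℤ)) = c + (-(n:ℝ)) * ((A₀:ℝ)+1) + (m:ℝ) := by
        simp only [hzm, hz, hP]
        push_cast
        ring
      rw [e]
      have : c + (m:ℝ) - x 0 + 1 ≤ (n:ℝ) := le_trans hn₁ hnn₁
      nlinarith [this, h2']
    -- a far-right index where x is above the line
    obtain ⟨N, hN⟩ := hbad (P + 1)
    have grow : ∀ t : ℕ, x N + (t:ℝ) * ((P:ℝ)+1) ≤ x (N + (t:ℤ)) := by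
      intro t
      induction t with
      | zero => simp
      | succ s ih =>
        have hstep := hN (N + (s:ℤ)) (by omega)
        push_cast at hstep ⊢
        push_cast at ih
        have e : N + ((s:ℝ)+1) = (N + (s:ℤ) : ℤ) + 1 := by push_cast; ring
        have e2 : (N:ℤ) + ((s:ℤ)+1) = (N + (s:ℤ)) + 1 := by ring
        rw [e2]
        linarith
    obtain ⟨t₁, ht₁⟩ := exists_nat_ge (c + (N:ℝ) * (P:ℝ) + (m:ℝ) - x N + 1)
    set t : ℕ := max t₁ (k - N + 1).toNat with ht
    have htt₁ : (t₁:ℝ) ≤ t := by exact_mod_cast le_max_left t₁ ((k-N+1).toNat)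
    set l : ℤ := N + (t:ℤ) with hldef
    have hlk : k < l := by
      have : (k - N + 1).toNat ≤ t := le_max_right _ _
      omega
    have hright : zm l < x l := by
      have hg := grow t
      have e : zm l = c + ((N:ℝ) + (t:ℝ)) * (P:ℝ) + (m:ℝ) := by
        simp only [hzm, hz, hldef]
        push_cast
        ring
      rw [e]
      have hb : c + (N:ℝ) * (P:ℝ) + (m:ℝ) - x N + 1 ≤ (t:ℝ) := le_trans ht₁ htt₁
      have hgl : x N + (t:ℝ) * ((P:ℝ)+1) ≤ x l := hg
      nlinarith [hb, hgl]
    exact cross h3 h4 hx hzmmin hnk hlk hleft hcon hright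
  -- contradiction
  have := step3 (⌈x 0 - c⌉ + 1) 0
  simp only [hz] at this
  have hceil := Int.le_ceil (x 0 - c)
  push_cast at this
  linarith

end BadCase

end RNAux

/-- Every minimal configuration has a rotation number. -/
theorem rotation_number_exists
    (h : ℝ → ℝ → ℝ) (hcont : Continuous (Function.uncurry h))
    (h1 : CondH1 h) (h2 : CondH2 h) (h3 : CondH3 h) (h4 : CondH4 h)
    (x : ℤ → ℝ) (hx : MinimalConfig h x) :
    ∃ α : ℝ, Tendsto (fun n : ℕ => x n / n) atTop (𝓝 α) := by
  classical
  -- eventual comparability with translates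
  have Dich : ∀ q p : ℤ, 0 < q →
      (∃ N, ∀ i ≥ N, x (i+q) ≤ x i + (p:ℝ)) ∨ (∃ N, ∀ i ≥ N, x i + (p:ℝ) ≤ x (i+q)) := by
    intro q p hq
    have hymin := RNAux.translate_min h1 hx q p
    rcases RNAux.dichotomy h3 h4 hx hymin with ⟨N, hN⟩ | ⟨N, hN⟩
    · refine Or.inl ⟨N, fun i hi => ?_⟩
      have h' : x (i+q) - (p:ℝ) ≤ x i := hN i hi
      linarith
    · refine Or.inr ⟨N, fun i hi => ?_⟩
      have h' : x i ≤ x (i+q) - (p:ℝ) := hN i hi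
      linarith
  -- the rotation number cannot be +∞
  have hnotup : ¬ (∀ p : ℤ, ∃ N, ∀ i ≥ N, x i + (p:ℝ) ≤ x (i+1)) :=
    fun hb => RNAux.badcase hcont h1 h2 h3 h4 hx hb
  -- the rotation number cannot be -∞
  have hnotdown : ¬ (∀ p : ℤ, ∃ N, ∀ i ≥ N, x (i+1) ≤ x i + (p:ℝ)) := by
    intro hb
    have hxn : MinimalConfig (RNAux.nh h) (fun i => - x i) := RNAux.nh_minimal hx
    apply RNAux.badcase (RNAux.nh_cont hcont) (RNAux.nh_h1 h1) (RNAux.nh_h2 h2)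
      (RNAux.nh_h3 h3) (RNAux.nh_h4 h4) hxn
    intro p
    obtain ⟨N, hN⟩ := hb (-p)
    refine ⟨N, fun i hi => ?_⟩
    have h' := hN i hi
    show - x i + (p:ℝ) ≤ - x (i+1)
    push_cast at h'
    linarith
  push_neg at hnotup hnotdown
  obtain ⟨pU, hpU⟩ := hnotup
  obtain ⟨pL, hpL⟩ := hnotdown
  have hU : ∃ N, ∀ i ≥ N, x (i+1) ≤ x i + (pU:ℝ) := by
    rcases Dich 1 pU one_pos with hA | ⟨N, hB⟩
    · exact hA
    · exfalso
      obtain ⟨i, hi1, hi2⟩ := hpU N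
      exact absurd (hB i hi1) (by linarith)
  have hL : ∃ N, ∀ i ≥ N, x i + (pL:ℝ) ≤ x (i+1) := by
    rcases Dich 1 pL one_pos with ⟨N, hA⟩ | hB
    · exfalso
      obtain ⟨i, hi1, hi2⟩ := hpL N
      exact absurd (hA i hi1) (by linarith)
    · exact hB
  obtain ⟨NU, hNU⟩ := hU
  obtain ⟨NL, hNL⟩ := hL
  -- the set of certified lower rates
  set S : Set ℝ := {r : ℝ | ∃ p q : ℤ, 0 < q ∧ r = (p:ℝ)/(q:ℝ) ∧
      ∃ N, ∀ i ≥ N, x i + (p:ℝ) ≤ x (i+q)} with hS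
  have hSne : S.Nonempty := by
    refine ⟨(pL:ℝ)/(1:ℝ), pL, 1, one_pos, by norm_num, NL, fun i hi => ?_⟩
    exact hNL i hi
  have hSbdd : ∀ r ∈ S, r ≤ (pU:ℝ) + 1 := by
    rintro r ⟨p, q, hq, rfl, N, hgrow⟩
    have hlow := RNAux.grow_lower hq hgrow (1/2) (by norm_num)
    have hupp := RNAux.grow_upper one_pos hNU (1/2) (by norm_num)
    obtain ⟨n, hn1, hn2⟩ := (hlow.and hupp).exists
    have e : ((1:ℤ):ℝ) = 1 := by norm_num
    rw [e, div_one] at hn2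
    linarith
  have hSbddAbove : BddAbove S := ⟨(pU:ℝ) + 1, fun r hr => hSbdd r hr⟩
  set α : ℝ := sSup S with hα
  refine ⟨α, ?_⟩
  rw [Metric.tendsto_atTop]
  intro ε hε
  -- eventual lower bound
  have hlower : ∀ᶠ n : ℕ in Filter.atTop, α - ε < x n / n := by
    obtain ⟨r, hrS, hr⟩ := exists_lt_of_lt_csSup hSne (show α - ε/2 < α by linarith)
    obtain ⟨p, q, hq, rfl, N, hgrow⟩ := hrS
    have hlow := RNAux.grow_lower hq hgrow (ε/2) (by linarith)
    filter_upwards [hlow] with n hn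
    linarith
  -- eventual upper bound
  have hupper : ∀ᶠ n : ℕ in Filter.atTop, x n / n < α + ε := by
    obtain ⟨ρ, hρ1, hρ2⟩ := exists_rat_btwn (show α < α + ε/2 by linarith)
    set q' : ℤ := (ρ.den : ℤ) with hq'def
    set p' : ℤ := ρ.num with hp'def
    have hq' : 0 < q' := by
      rw [hq'def]
      exact_mod_cast ρ.pos
    have hρval : (ρ:ℝ) = (p':ℝ)/(q':ℝ) := by
      rw [hp'def, hq'def, Rat.cast_def]
      norm_num
    rcases Dich q' p' hq' with ⟨N, hUp⟩ | ⟨N, hLo⟩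
    · have hupp := RNAux.grow_upper hq' hUp (ε/2) (by linarith)
      filter_upwards [hupp] with n hn
      rw [← hρval] at hn
      linarith
    · exfalso
      have hρS : (ρ:ℝ) ∈ S := ⟨p', q', hq', hρval, N, hLo⟩
      have := le_csSup hSbddAbove hρS
      linarith
  have hcomb := hlower.and hupper
  rw [Filter.eventually_atTop] at hcomb
  obtain ⟨N, hN⟩ := hcomb
  refine ⟨N, fun n hn => ?_⟩
  obtain ⟨hb1, hb2⟩ := hN n hn
  rw [Real.dist_eq, abs_lt]
  constructor <;> linarith
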